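/- arXiv:2105.05283 — 3 statements merged into one kernel-verified Lean document; each statement's English description precedes it below -/
import Mathlib

section
/- Fix θ > 0. Define g_θ(z) = (Σ_{n=0}^∞ 1/(n+θ-z)²) / (Σ_{n=0}^∞ 1/(n+z)²) for z ∈ (0,θ). Then g_θ is a strictly increasing continuous bijection from (0,θ) onto (0,∞), and its inverse g_θ^{-1} satisfies g_θ^{-1}(1) = θ/2 and g_θ^{-1}(1/x) = θ - g_θ^{-1}(x) for all x > 0. -/
open Real Set

/-- The function `g_θ(z) = (Σ_{n≥0} 1/(n+θ-z)²)/(Σ_{n≥0} 1/(n+z)²)`. -/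
noncomputable def gFun (θ z : ℝ) : ℝ :=
  (∑' n : ℕ, 1 / ((n : ℝ) + θ - z) ^ 2) / (∑' n : ℕ, 1 / ((n : ℝ) + z) ^ 2)

noncomputable def Fs (w : ℝ) : ℝ := ∑' n : ℕ, 1 / ((n : ℝ) + w) ^ 2

lemma Fs_summable {z : ℝ} (hz : 0 < z) :
    Summable (fun n : ℕ => 1 / ((n : ℝ) + z) ^ 2) := by
  rw [← summable_nat_add_iff 1]
  have h1 : Summable (fun n : ℕ => 1 / ((n : ℝ) + 1) ^ 2) := by
    have := (summable_nat_add_iff (f := fun n : ℕ => 1 / (n : ℝ) ^ 2) 1).2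
      (Real.summable_one_div_nat_pow.mpr one_lt_two)
    simpa using this
  apply h1.of_nonneg_of_le (fun n => by positivity) (fun n => ?_)
  push_cast
  apply one_div_le_one_div_of_le (by positivity)
  have : (0:ℝ) ≤ (n:ℝ) + 1 := by positivity
  nlinarith

lemma Fs_pos {z : ℝ} (hz : 0 < z) : 0 < Fs z :=
  Summable.tsum_pos (Fs_summable hz) (fun n => by positivity) 0 (by positivity)

lemma Fs_lt {a b : ℝ} (ha : 0 < a) (hab : a < b) : Fs b < Fs a := by
  apply Summable.tsum_lt_tsum_of_nonneg (i := 0) (fun n => by positivity) (fun n => ?_) ?_ (Fs_summable ha)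
  · apply one_div_lt_one_div_of_lt (by positivity)
    push_cast
    nlinarith [ha.le]
  · apply one_div_le_one_div_of_le (by positivity)
    have h0 : (0:ℝ) ≤ (n:ℝ) + a := by positivity
    nlinarith


lemma Fs_contAt {z0 : ℝ} (h : 0 < z0) : ContinuousAt Fs z0 := by
  have key : ContinuousOn Fs (Ici (z0 / 2)) := by
    apply continuousOn_tsum (u := fun n : ℕ => 1 / ((n : ℝ) + z0 / 2) ^ 2)
    · intro n
      apply ContinuousOn.div continuousOn_const (by fun_prop)
      intro x hx
      have hx' : z0 / 2 ≤ x := hx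
      have hn : (0:ℝ) ≤ (n:ℝ) := Nat.cast_nonneg n
      have : (0:ℝ) < (n:ℝ) + x := by linarith
      positivity
    · exact Fs_summable (by positivity)
    · intro n x hx
      have hx' : z0 / 2 ≤ x := hx
      have hn : (0:ℝ) ≤ (n:ℝ) := Nat.cast_nonneg n
      have h1 : (0:ℝ) < (n:ℝ) + x := by linarith
      rw [Real.norm_of_nonneg (by positivity)]
      apply one_div_le_one_div_of_le (by positivity)
      nlinarith
  exact key.continuousAt (Ici_mem_nhds (by linarith))

lemma gFun_eq (θ z : ℝ) : gFun θ z = Fs (θ - z) / Fs z := by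
  unfold gFun Fs
  simp only [add_sub_assoc]

lemma Fs_le_tsum {z : ℝ} (hz : 0 < z) : 1 / z ^ 2 ≤ Fs z := by
  have := Summable.le_tsum (Fs_summable hz) 0 (fun n _ => by positivity)
  simpa [Fs] using this

/-- For `θ > 0`, `g_θ` is a strictly increasing continuous bijection from `(0,θ)` onto
`(0,∞)`; its inverse satisfies `g_θ⁻¹(1) = θ/2` (i.e. `g_θ(θ/2) = 1`) and
`g_θ⁻¹(1/x) = θ - g_θ⁻¹(x)` (i.e. if `g_θ(z) = x` then `g_θ(θ - z) = x⁻¹`). -/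
theorem gFun_bijection (θ : ℝ) (hθ : 0 < θ) :
    StrictMonoOn (gFun θ) (Set.Ioo 0 θ) ∧
    ContinuousOn (gFun θ) (Set.Ioo 0 θ) ∧
    Set.BijOn (gFun θ) (Set.Ioo 0 θ) (Set.Ioi 0) ∧
    gFun θ (θ / 2) = 1 ∧
    ∀ x ∈ Set.Ioi (0 : ℝ), ∀ z ∈ Set.Ioo 0 θ, gFun θ z = x → gFun θ (θ - z) = x⁻¹ := by
  have hmono : StrictMonoOn (gFun θ) (Set.Ioo 0 θ) := by
    intro a ha b hb hab
    rw [gFun_eq, gFun_eq]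
    have h1 : Fs (θ - a) < Fs (θ - b) := Fs_lt (by linarith [hb.2]) (by linarith)
    have h2 : Fs b < Fs a := Fs_lt ha.1 hab
    have hpa : 0 < Fs (θ - a) := Fs_pos (by linarith [ha.2])
    have hpb : 0 < Fs b := Fs_pos hb.1
    exact div_lt_div₀ h1 h2.le (Fs_pos (by linarith [hb.2])).le hpb
  have hcont : ContinuousOn (gFun θ) (Set.Ioo 0 θ) := by
    intro z hz
    apply ContinuousAt.continuousWithinAt
    have h1 : ContinuousAt (fun z => Fs (θ - z)) z :=
      (Fs_contAt (by linarith [hz.2])).comp (by fun_prop)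
    have h2 : ContinuousAt Fs z := Fs_contAt hz.1
    have := h1.div h2 (Fs_pos hz.1).ne'
    have heq : gFun θ = fun z => Fs (θ - z) / Fs z := funext fun z => gFun_eq θ z
    rw [heq]
    exact this
  have hhalf : gFun θ (θ / 2) = 1 := by
    rw [gFun_eq]
    have : θ - θ / 2 = θ / 2 := by ring
    rw [this, div_self (Fs_pos (by linarith)).ne']
  have hsymm : ∀ z ∈ Set.Ioo 0 θ, gFun θ (θ - z) = (gFun θ z)⁻¹ := by
    intro z hz
    rw [gFun_eq, gFun_eq]
    have : θ - (θ - z) = z := by ring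
    rw [this, inv_div]
  have hmaps : Set.MapsTo (gFun θ) (Set.Ioo 0 θ) (Set.Ioi 0) := by
    intro z hz
    rw [gFun_eq]
    exact div_pos (Fs_pos (by linarith [hz.2])) (Fs_pos hz.1)
  refine ⟨hmono, hcont, ⟨hmaps, hmono.injOn, ?_⟩, hhalf, ?_⟩
  · -- surjectivity
    intro y hy
    have hy' : (0:ℝ) < y := hy
    set C : ℝ := Fs (θ / 2) with hC
    have hCpos : 0 < C := Fs_pos (by linarith)
    set m : ℝ := min y y⁻¹ with hm
    have hmpos : 0 < m := lt_min hy' (by positivity)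
    set z : ℝ := min (θ / 4) (Real.sqrt (m / (C + 1))) with hzdef
    have hzpos : 0 < z := lt_min (by linarith) (Real.sqrt_pos.mpr (by positivity))
    have hz4 : z ≤ θ / 4 := min_le_left _ _
    have hzsq : z ^ 2 ≤ m / (C + 1) := by
      have h1 : z ≤ Real.sqrt (m / (C + 1)) := min_le_right _ _
      have := Real.sq_sqrt (le_of_lt (show (0:ℝ) < m / (C + 1) by positivity))
      nlinarith [hzpos]
    have hzmem : z ∈ Set.Ioo (0:ℝ) θ := ⟨hzpos, by linarith⟩
    have hzmem' : θ - z ∈ Set.Ioo (0:ℝ) θ := ⟨by linarith, by linarith⟩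
    -- bound g z
    have hgz_small : gFun θ z < m := by
      rw [gFun_eq]
      have hb1 : Fs (θ - z) ≤ C := by
        rw [hC]
        exact (Fs_lt (by linarith) (by linarith)).le
      have hb2 : 1 / z ^ 2 ≤ Fs z := Fs_le_tsum hzpos
      have hFz : 0 < Fs z := Fs_pos hzpos
      have key : Fs (θ - z) / Fs z ≤ C * z ^ 2 := by
        rw [div_le_iff₀ hFz]
        have : C * (1 / z ^ 2) ≤ C * Fs z := by
          apply mul_le_mul_of_nonneg_left hb2 hCpos.le
        calc Fs (θ - z) ≤ C := hb1
          _ = C * (1 / z ^ 2) * z ^ 2 := by field_simp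
          _ ≤ C * Fs z * z ^ 2 := by nlinarith [sq_nonneg z]
          _ = C * z ^ 2 * Fs z := by ring
      have : C * z ^ 2 < m := by
        have : C * z ^ 2 ≤ C * (m / (C + 1)) := mul_le_mul_of_nonneg_left hzsq hCpos.le
        have h2 : C * (m / (C + 1)) < m := by
          rw [mul_div_assoc']
          rw [div_lt_iff₀ (by linarith)]
          nlinarith
        linarith
      linarith
    have hgz_pos : 0 < gFun θ z := hmaps hzmem
    have h1 : gFun θ z < y := lt_of_lt_of_le hgz_small (min_le_left _ _)
    have h2 : y < gFun θ (θ - z) := by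
      rw [hsymm z hzmem]
      have hlt : gFun θ z < y⁻¹ := lt_of_lt_of_le hgz_small (min_le_right _ _)
      have h3 := one_div_lt_one_div_of_lt hgz_pos hlt
      rw [one_div, one_div, inv_inv] at h3
      exact h3
    have hle : z ≤ θ - z := by linarith
    have hsub : Set.Icc z (θ - z) ⊆ Set.Ioo 0 θ := fun c hc =>
      ⟨lt_of_lt_of_le hzpos hc.1, lt_of_le_of_lt hc.2 (by linarith)⟩
    have hIVT := intermediate_value_Icc hle (hcont.mono hsub)
    have hyIcc : y ∈ Set.Icc (gFun θ z) (gFun θ (θ - z)) := ⟨h1.le, h2.le⟩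
    obtain ⟨c, hc, hcy⟩ := hIVT hyIcc
    exact ⟨c, hsub hc, hcy⟩
  · intro x hx z hz hgz
    rw [hsymm z hz, hgz]
end

section
/- Let θ_c = 2γ* where γ* is the unique zero of the digamma function Ψ on (0,∞). Then the function h_{θ_c} satisfies: h_{θ_c}'(1) = 0, h_{θ_c} is minimized at x = 1 among x ∈ (0,∞), h_{θ_c}(x) ≥ 0 for x ∈ (0,1], and h_{θ_c}(x) ≥ h_{θ_c}(1/2) > 0 for x ∈ (0, 1/2]. -/
open Real Set

/-- The digamma function, defined by its series representation. -/
noncomputable def digamma (z : ℝ) : ℝ :=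
  -Real.eulerMascheroniConstant + ∑' n : ℕ, (1 / ((n : ℝ) + 1) - 1 / ((n : ℝ) + z))

/-- The function `h_θ(x) = x Ψ(u(x)) + Ψ(θ - u(x))` where `u = g_θ⁻¹`. -/
noncomputable def hTheta (θ : ℝ) (u : ℝ → ℝ) (x : ℝ) : ℝ :=
  x * digamma (u x) + digamma (θ - u x)

private lemma sumsq {a : ℝ} (ha : 0 < a) :
    Summable (fun n : ℕ => 1 / ((n : ℝ) + a) ^ 2) := by
  have h1 : Summable (fun n : ℕ => 1 / ((n : ℝ) + 1) ^ 2) := by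
    have : Summable (fun n : ℕ => 1 / (n : ℝ) ^ 2) :=
      Real.summable_one_div_nat_pow.mpr one_lt_two
    have := (summable_nat_add_iff 1).mpr this
    simpa using this
  set C : ℝ := (max (1/a) 1) ^ 2 with hC
  refine Summable.of_nonneg_of_le (fun n => by positivity) (fun n => ?_) (h1.mul_left C)
  have hna : (0:ℝ) < (n:ℝ) + a := by positivity
  have hn1 : (0:ℝ) < (n:ℝ) + 1 := by positivity
  have key : (n:ℝ) + 1 ≤ (max (1/a) 1) * ((n:ℝ) + a) := by
    rcases le_total 1 a with h | h
    · calc (n:ℝ) + 1 ≤ (n:ℝ) + a := by linarith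
        _ ≤ (max (1/a) 1) * ((n:ℝ) + a) := le_mul_of_one_le_left hna.le (le_max_right _ _)
    · calc (n:ℝ) + 1 ≤ (1/a) * ((n:ℝ) + a) := by
            rw [div_mul_eq_mul_div, le_div_iff₀ ha]
            nlinarith [Nat.cast_nonneg (α := ℝ) n]
        _ ≤ (max (1/a) 1) * ((n:ℝ) + a) :=
            mul_le_mul_of_nonneg_right (le_max_left _ _) hna.le
  have this2 : ((n:ℝ)+1)^2 ≤ C * ((n:ℝ)+a)^2 := by
    rw [hC, ← mul_pow]
    exact pow_le_pow_left₀ hn1.le key 2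
  rw [div_le_iff₀ (by positivity), mul_one_div, div_mul_eq_mul_div,
    le_div_iff₀ (by positivity), one_mul]
  linarith [this2]

private lemma sumprod {a b : ℝ} (ha : 0 < a) (hb : 0 < b) :
    Summable (fun n : ℕ => 1 / (((n : ℝ) + a) * ((n : ℝ) + b))) := by
  refine Summable.of_nonneg_of_le (fun n => by positivity) (fun n => ?_)
    (((sumsq ha).add (sumsq hb)).mul_left (1/2))
  have h1 : (0:ℝ) < (n:ℝ)+a := by positivity
  have h2 : (0:ℝ) < (n:ℝ)+b := by positivity
  rw [← one_div_mul_one_div, ← one_div_pow, ← one_div_pow]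
  nlinarith [sq_nonneg (1/((n:ℝ)+a) - 1/((n:ℝ)+b))]

private lemma A_pos {a : ℝ} (ha : 0 < a) : 0 < ∑' n : ℕ, 1 / ((n : ℝ) + a) ^ 2 :=
  Summable.tsum_pos (sumsq ha) (fun n => by positivity) 0 (by positivity)

private lemma A_lt {a b : ℝ} (ha : 0 < a) (hab : a < b) :
    (∑' n : ℕ, 1 / ((n : ℝ) + b) ^ 2) < ∑' n : ℕ, 1 / ((n : ℝ) + a) ^ 2 := by
  have hb : 0 < b := ha.trans hab
  refine Summable.tsum_lt_tsum (i := 0) (fun n => ?_) ?_ (sumsq hb) (sumsq ha)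
  · have h1 : (0:ℝ) < (n:ℝ)+a := by positivity
    gcongr
  · show 1 / ((0:ℕ) + b : ℝ) ^ 2 < 1 / ((0:ℕ) + a : ℝ) ^ 2
    push_cast
    rw [zero_add, zero_add, ← one_div_pow, ← one_div_pow]
    have h := one_div_lt_one_div_of_lt ha hab
    have h2 : 0 < 1/b := by positivity
    nlinarith

private lemma sumdiff {a b : ℝ} (ha : 0 < a) (hb : 0 < b) :
    Summable (fun n : ℕ => 1 / ((n : ℝ) + a) - 1 / ((n : ℝ) + b)) := by
  refine (((sumprod ha hb)).mul_left (b - a)).congr fun n => ?_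
  have h1 : ((n:ℝ)+a) ≠ 0 := by positivity
  have h2 : ((n:ℝ)+b) ≠ 0 := by positivity
  field_simp
  ring

private lemma digamma_sub {a b : ℝ} (ha : 0 < a) (hb : 0 < b) :
    digamma b - digamma a = ∑' n : ℕ, (1 / ((n : ℝ) + a) - 1 / ((n : ℝ) + b)) := by
  have h1 : Summable (fun n : ℕ => 1 / ((n : ℝ) + 1) - 1 / ((n : ℝ) + b)) := by
    simpa using sumdiff one_pos hb
  have h2 : Summable (fun n : ℕ => 1 / ((n : ℝ) + 1) - 1 / ((n : ℝ) + a)) := by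
    simpa using sumdiff one_pos ha
  rw [digamma, digamma,
    show ∀ p q r : ℝ, (-r + p) - (-r + q) = p - q from fun p q r => by ring,
    ← Summable.tsum_sub h1 h2]
  exact tsum_congr fun n => by ring

private lemma digamma_lt {a b : ℝ} (ha : 0 < a) (hab : a < b) : digamma a < digamma b := by
  have hb : 0 < b := ha.trans hab
  have h := digamma_sub ha hb
  have hpos : 0 < ∑' n : ℕ, (1 / ((n : ℝ) + a) - 1 / ((n : ℝ) + b)) := by
    refine Summable.tsum_pos (sumdiff ha hb) (fun n => ?_) 0 ?_
    · have h1 : (0:ℝ) < (n:ℝ)+a := by positivity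
      have : 1 / ((n:ℝ)+b) ≤ 1 / ((n:ℝ)+a) := by gcongr
      linarith
    · show 0 < 1 / ((0:ℕ) + a : ℝ) - 1 / ((0:ℕ) + b : ℝ)
      push_cast
      rw [zero_add, zero_add]
      have : 1 / b < 1 / a := one_div_lt_one_div_of_lt ha hab
      linarith
  linarith

private lemma gA (θ z : ℝ) : gFun θ z =
    (∑' n : ℕ, 1 / ((n : ℝ) + (θ - z)) ^ 2) / (∑' n : ℕ, 1 / ((n : ℝ) + z) ^ 2) := by
  rw [gFun]
  congr 1
  exact tsum_congr fun n => by rw [add_sub_assoc]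

private lemma gFun_lt {θ z1 z2 : ℝ} (h1 : 0 < z1) (h12 : z1 < z2) (h2 : z2 < θ) :
    gFun θ z1 < gFun θ z2 := by
  have hz2 : 0 < z2 := h1.trans h12
  have hθ2 : 0 < θ - z2 := by linarith
  have hθ1 : 0 < θ - z1 := by linarith
  rw [gA, gA]
  calc (∑' n : ℕ, 1 / ((n : ℝ) + (θ - z1)) ^ 2) / (∑' n : ℕ, 1 / ((n : ℝ) + z1) ^ 2)
      < (∑' n : ℕ, 1 / ((n : ℝ) + (θ - z1)) ^ 2) / (∑' n : ℕ, 1 / ((n : ℝ) + z2) ^ 2) := by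
        apply div_lt_div_of_pos_left (A_pos hθ1) (A_pos hz2) (A_lt h1 h12)
    _ < (∑' n : ℕ, 1 / ((n : ℝ) + (θ - z2)) ^ 2) / (∑' n : ℕ, 1 / ((n : ℝ) + z2) ^ 2) := by
        apply div_lt_div_of_pos_right (A_lt hθ2 (by linarith)) (A_pos hz2)

private lemma A_mul_g {θ z : ℝ} (hz : 0 < z) :
    gFun θ z * (∑' n : ℕ, 1 / ((n : ℝ) + z) ^ 2) = ∑' n : ℕ, 1 / ((n : ℝ) + (θ - z)) ^ 2 := by
  rw [gA, div_mul_cancel₀]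
  exact (A_pos hz).ne'

private lemma tsum_diff_lb {a b : ℝ} (ha : 0 < a) (hab : a < b) :
    (b - a) * ∑' n : ℕ, 1 / ((n : ℝ) + b) ^ 2 ≤
      ∑' n : ℕ, (1 / ((n : ℝ) + a) - 1 / ((n : ℝ) + b)) := by
  have hb : 0 < b := ha.trans hab
  rw [← tsum_mul_left]
  refine Summable.tsum_le_tsum (fun n => ?_) ((sumsq hb).mul_left _) (sumdiff ha hb)
  have h1 : (0:ℝ) < (n:ℝ)+a := by positivity
  have h2 : (0:ℝ) < (n:ℝ)+b := by positivity
  have e : 1 / ((n:ℝ)+a) - 1 / ((n:ℝ)+b) = (b - a) * (1 / (((n:ℝ)+a) * ((n:ℝ)+b))) := by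
    field_simp
    ring
  rw [e]
  gcongr <;> nlinarith

private lemma tsum_diff_ub {a b : ℝ} (ha : 0 < a) (hab : a < b) :
    ∑' n : ℕ, (1 / ((n : ℝ) + a) - 1 / ((n : ℝ) + b)) ≤
      (b - a) * ∑' n : ℕ, 1 / ((n : ℝ) + a) ^ 2 := by
  have hb : 0 < b := ha.trans hab
  rw [← tsum_mul_left]
  refine Summable.tsum_le_tsum (fun n => ?_) (sumdiff ha hb) ((sumsq ha).mul_left _)
  have h1 : (0:ℝ) < (n:ℝ)+a := by positivity
  have h2 : (0:ℝ) < (n:ℝ)+b := by positivity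
  have e : 1 / ((n:ℝ)+a) - 1 / ((n:ℝ)+b) = (b - a) * (1 / (((n:ℝ)+a) * ((n:ℝ)+b))) := by
    field_simp
    ring
  rw [e]
  gcongr <;> nlinarith

private lemma diff_eq {θ z1 z2 : ℝ} (h1 : 0 < z1) (h12 : z1 < z2) (h2 : z2 < θ) (x : ℝ) :
    (x * digamma z2 + digamma (θ - z2)) - (x * digamma z1 + digamma (θ - z1)) =
      x * (∑' n : ℕ, (1 / ((n : ℝ) + z1) - 1 / ((n : ℝ) + z2)))
        - ∑' n : ℕ, (1 / ((n : ℝ) + (θ - z2)) - 1 / ((n : ℝ) + (θ - z1))) := by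
  have hz2 : 0 < z2 := h1.trans h12
  have hθ2 : 0 < θ - z2 := by linarith
  have hθ1 : 0 < θ - z1 := by linarith
  rw [← digamma_sub h1 hz2, ← digamma_sub hθ2 hθ1]
  ring

private lemma diff_lower {θ x z1 z2 : ℝ} (h1 : 0 < z1) (h12 : z1 < z2) (h2 : z2 < θ)
    (hx : 0 ≤ x) :
    (z2 - z1) * ((∑' n : ℕ, 1 / ((n : ℝ) + z2) ^ 2) * (x - gFun θ z2)) ≤
      (x * digamma z2 + digamma (θ - z2)) - (x * digamma z1 + digamma (θ - z1)) := by
  have hz2 : 0 < z2 := h1.trans h12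
  have hθ2 : 0 < θ - z2 := by linarith
  rw [diff_eq h1 h12 h2 x]
  have hS1 := tsum_diff_lb h1 h12
  have hS2 : (∑' n : ℕ, (1 / ((n : ℝ) + (θ - z2)) - 1 / ((n : ℝ) + (θ - z1)))) ≤
      (z2 - z1) * ∑' n : ℕ, 1 / ((n : ℝ) + (θ - z2)) ^ 2 := by
    have := tsum_diff_ub hθ2 (show θ - z2 < θ - z1 by linarith)
    simpa [show θ - z1 - (θ - z2) = z2 - z1 by ring] using this
  have hAg := A_mul_g (θ := θ) hz2
  have t1 : x * ((z2 - z1) * ∑' n : ℕ, 1 / ((n : ℝ) + z2) ^ 2) ≤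
      x * (∑' n : ℕ, (1 / ((n : ℝ) + z1) - 1 / ((n : ℝ) + z2))) :=
    mul_le_mul_of_nonneg_left hS1 hx
  nlinarith [t1, hS2, hAg]

private lemma diff_upper {θ x z1 z2 : ℝ} (h1 : 0 < z1) (h12 : z1 < z2) (h2 : z2 < θ)
    (hx : 0 ≤ x) :
    (x * digamma z2 + digamma (θ - z2)) - (x * digamma z1 + digamma (θ - z1)) ≤
      (z2 - z1) * ((∑' n : ℕ, 1 / ((n : ℝ) + z1) ^ 2) * (x - gFun θ z1)) := by
  have hz2 : 0 < z2 := h1.trans h12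
  have hθ2 : 0 < θ - z2 := by linarith
  have hθ1 : 0 < θ - z1 := by linarith
  rw [diff_eq h1 h12 h2 x]
  have hS1 := tsum_diff_ub h1 h12
  have hS2 : (z2 - z1) * ∑' n : ℕ, 1 / ((n : ℝ) + (θ - z1)) ^ 2 ≤
      ∑' n : ℕ, (1 / ((n : ℝ) + (θ - z2)) - 1 / ((n : ℝ) + (θ - z1))) := by
    have := tsum_diff_lb hθ2 (show θ - z2 < θ - z1 by linarith)
    simpa [show θ - z1 - (θ - z2) = z2 - z1 by ring] using this
  have hAg := A_mul_g (θ := θ) h1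
  have t1 : x * (∑' n : ℕ, (1 / ((n : ℝ) + z1) - 1 / ((n : ℝ) + z2))) ≤
      x * ((z2 - z1) * ∑' n : ℕ, 1 / ((n : ℝ) + z1) ^ 2) :=
    mul_le_mul_of_nonneg_left hS1 hx
  nlinarith [t1, hS2, hAg]

/-- Let `θ_c = 2γ*` where `γ*` is the unique zero of the digamma function on `(0,∞)`,
and let `u = g_{θ_c}⁻¹`. Then `h_{θ_c}'(1) = Ψ(u(1)) = 0`, `h_{θ_c}` is minimized at
`x = 1` on `(0,∞)`, `h_{θ_c}(x) ≥ 0` on `(0,1]`, and `h_{θ_c}(x) ≥ h_{θ_c}(1/2) > 0`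
on `(0,1/2]`. -/
theorem hThetaCrit_min (γs : ℝ) (hγs : 0 < γs) (hzero : digamma γs = 0)
    (θc : ℝ) (hθc : θc = 2 * γs) (u : ℝ → ℝ)
    (hu : ∀ x : ℝ, 0 < x → u x ∈ Set.Ioo 0 θc ∧ gFun θc (u x) = x) :
    digamma (u 1) = 0 ∧
    (∀ x ∈ Set.Ioi (0 : ℝ), hTheta θc u 1 ≤ hTheta θc u x) ∧
    (∀ x ∈ Set.Ioc (0 : ℝ) 1, 0 ≤ hTheta θc u x) ∧
    0 < hTheta θc u (1 / 2) ∧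
    (∀ x ∈ Set.Ioc (0 : ℝ) (1 / 2), hTheta θc u (1 / 2) ≤ hTheta θc u x) := by
  have hγθ : γs < θc := by linarith
  have hgγ : gFun θc γs = 1 := by
    rw [gA, show θc - γs = γs by linarith, div_self (A_pos hγs).ne']
  -- main: h(x) ≥ H(x,z) for z ∈ (0,θc)
  have main : ∀ x : ℝ, 0 < x → ∀ z : ℝ, 0 < z → z < θc →
      x * digamma z + digamma (θc - z) ≤ hTheta θc u x := by
    intro x hx z hz0 hzθ
    obtain ⟨⟨huz0, huzθ⟩, hgu⟩ := hu x hx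
    rw [hTheta]
    rcases lt_trichotomy z (u x) with h | h | h
    · have := diff_lower hz0 h huzθ hx.le
      rw [hgu] at this
      simp only [sub_self, mul_zero] at this
      linarith
    · rw [h]
    · have := diff_upper huz0 h hzθ hx.le
      rw [hgu] at this
      simp only [sub_self, mul_zero] at this
      linarith
  -- u 1 = γs
  have hu1 : u 1 = γs := by
    obtain ⟨⟨h0, hθ⟩, hg1⟩ := hu 1 one_pos
    rcases lt_trichotomy (u 1) γs with h | h | h
    · have := gFun_lt h0 h hγθ
      rw [hg1, hgγ] at this
      linarith
    · exact h
    · have := gFun_lt hγs h hθ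
      rw [hg1, hgγ] at this
      linarith
  have h1zero : hTheta θc u 1 = 0 := by
    rw [hTheta, hu1, hzero, show θc - γs = γs by linarith, hzero]
    ring
  -- u (1/2) < γs
  obtain ⟨⟨hu2a, hu2b⟩, hgu2⟩ := hu (1/2) (by norm_num)
  have hu2γ : u (1/2) < γs := by
    rcases lt_trichotomy (u (1/2)) γs with h | h | h
    · exact h
    · rw [h, hgγ] at hgu2; norm_num at hgu2
    · have := gFun_lt hγs h hu2b
      rw [hgu2, hgγ] at this
      linarith
  have hψu2 : digamma (u (1/2)) < 0 := by
    have := digamma_lt hu2a hu2γ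
    rwa [hzero] at this
  -- h(1/2) > 0
  have hhalf_pos : 0 < hTheta θc u (1/2) := by
    set m := (u (1/2) + γs) / 2 with hm
    have hm1 : u (1/2) < m := by rw [hm]; linarith
    have hm2 : m < γs := by rw [hm]; linarith
    have hm0 : 0 < m := hu2a.trans hm1
    have hgm : 1/2 < gFun θc m := by
      have := gFun_lt hu2a hm1 (lt_trans hm2 hγθ)
      rwa [hgu2] at this
    -- H(1/2, γs) < H(1/2, m)
    have hd := diff_upper (θ := θc) (x := 1/2) hm0 hm2 hγθ (by norm_num)
    have hAm : 0 < ∑' n : ℕ, 1 / ((n : ℝ) + m) ^ 2 := A_pos hm0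
    have hneg : (γs - m) * ((∑' n : ℕ, 1 / ((n : ℝ) + m) ^ 2) * (1/2 - gFun θc m)) < 0 := by
      apply mul_neg_of_pos_of_neg (by linarith)
      apply mul_neg_of_pos_of_neg hAm
      linarith
    have hHγ : (1:ℝ)/2 * digamma γs + digamma (θc - γs) = 0 := by
      rw [hzero, show θc - γs = γs by linarith, hzero]; ring
    have hHm := main (1/2) (by norm_num) m hm0 (lt_trans hm2 hγθ)
    linarith
  refine ⟨by rw [hu1]; exact hzero, ?_, ?_, hhalf_pos, ?_⟩
  · intro x hx
    rw [h1zero]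
    have := main x hx γs hγs hγθ
    rw [hzero, show θc - γs = γs by linarith, hzero] at this
    linarith
  · intro x hx
    have := main x hx.1 γs hγs hγθ
    rw [hzero, show θc - γs = γs by linarith, hzero] at this
    linarith
  · intro x ⟨hx0, hx2⟩
    have hH := main x hx0 (u (1/2)) hu2a hu2b
    have heq : hTheta θc u (1/2) = 1/2 * digamma (u (1/2)) + digamma (θc - u (1/2)) := rfl
    nlinarith [hH, hψu2, hx2]
end

section
/- Suppose F(x) and G_N(x) are cumulative distribution functions, f_M(z) = exp(-e^{σ M^{1/3} z}) with σ > 0, and X is a random variable with CDF G. If for x ∈ ℝ and x^± = x ± M^{-1/3}(log M)² we have |E[f_M(X - x^-)] - F(x^-)| ≤ M^{-ε} and |E[f_M(X - x^+)] - F(x^+)| ≤ M^{-ε}, then G(x) ≥ F(x^-) - M^{-ε} - e^{-e^{σ(log M)²}} and 1 - G(x) ≥ 1 - F(x^+) - M^{-ε} - (1 - e^{-e^{-σ(log M)²}}); i.e. F(x^-) - 2M^{-ε} ≤ G(x) ≤ F(x^+) + 2M^{-ε} provided e^{-e^{σ(log M)²}} ≤ M^{-ε} and 1 - e^{-e^{-σ(log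 M)²}} ≤ M^{-ε}. -/
open Real MeasureTheory

/-- Laplace-transform-type comparison of distribution functions: if the expectations of
`f_M(X - x^±)` are within `M^{-ε}` of `F(x^±)`, then the CDF `G` of `X` at `x` is trapped
between `F(x^-) - 2M^{-ε}` and `F(x^+) + 2M^{-ε}` (under the stated provisos). -/
theorem cdf_comparison (M ε σ x : ℝ) (hM : 2 ≤ M) (hε : ε ∈ Set.Ioo (0 : ℝ) (1 / 3))
    (hσ : 0 < σ)
    {Ω : Type} [MeasurableSpace Ω] (μ : Measure Ω) [IsProbabilityMeasure μ]
    (X : Ω → ℝ) (hX : Measurable X) (F : ℝ → ℝ)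
    (fM : ℝ → ℝ) (hfM : ∀ z : ℝ, fM z = Real.exp (-Real.exp (σ * M ^ ((1 : ℝ) / 3) * z)))
    (xm xp : ℝ)
    (hxm : xm = x - M ^ (-(1 : ℝ) / 3) * (Real.log M) ^ 2)
    (hxp : xp = x + M ^ (-(1 : ℝ) / 3) * (Real.log M) ^ 2)
    (h1 : |(∫ ω, fM (X ω - xm) ∂μ) - F xm| ≤ M ^ (-ε))
    (h2 : |(∫ ω, fM (X ω - xp) ∂μ) - F xp| ≤ M ^ (-ε)) :
    (F xm - M ^ (-ε) - Real.exp (-Real.exp (σ * (Real.log M) ^ 2)) ≤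
      (μ {ω | X ω ≤ x}).toReal) ∧
    (1 - F xp - M ^ (-ε) - (1 - Real.exp (-Real.exp (-σ * (Real.log M) ^ 2))) ≤
      1 - (μ {ω | X ω ≤ x}).toReal) ∧
    (Real.exp (-Real.exp (σ * (Real.log M) ^ 2)) ≤ M ^ (-ε) →
      1 - Real.exp (-Real.exp (-σ * (Real.log M) ^ 2)) ≤ M ^ (-ε) →
      F xm - 2 * M ^ (-ε) ≤ (μ {ω | X ω ≤ x}).toReal ∧
      (μ {ω | X ω ≤ x}).toReal ≤ F xp + 2 * M ^ (-ε)) := by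
  obtain ⟨hε0, hε3⟩ := hε
  have hM0 : (0 : ℝ) < M := by linarith
  have hMM : M ^ ((1 : ℝ) / 3) * M ^ (-(1 : ℝ) / 3) = 1 := by
    rw [← Real.rpow_add hM0]; norm_num
  have hMpow : 0 < M ^ ((1 : ℝ) / 3) := Real.rpow_pos_of_pos hM0 _
  set c1 : ℝ := Real.exp (-Real.exp (σ * (Real.log M) ^ 2)) with hc1
  set c2 : ℝ := 1 - Real.exp (-Real.exp (-σ * (Real.log M) ^ 2)) with hc2
  have hc1pos : 0 < c1 := Real.exp_pos _
  have hc2pos : 0 ≤ c2 := by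
    have : Real.exp (-Real.exp (-σ * (Real.log M) ^ 2)) ≤ 1 :=
      Real.exp_le_one_iff.mpr (neg_nonpos.mpr (Real.exp_pos _).le)
    linarith
  set s : Set Ω := {ω | X ω ≤ x} with hs
  have hsm : MeasurableSet s := hX measurableSet_Iic
  set G : ℝ := (μ s).toReal with hG
  have hGint : (∫ ω, s.indicator (fun _ => (1 : ℝ)) ω ∂μ) = G := by
    rw [integral_indicator_const _ hsm]; simp [hG]; rfl
  have hfM01 : ∀ z : ℝ, 0 ≤ fM z ∧ fM z ≤ 1 := by
    intro z
    rw [hfM]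
    exact ⟨(Real.exp_pos _).le,
      Real.exp_le_one_iff.mpr (neg_nonpos.mpr (Real.exp_pos _).le)⟩
  have hfmeas : ∀ a : ℝ, Measurable fun ω => fM (X ω - a) := by
    intro a
    have h : Measurable fun ω => X ω - a := hX.sub measurable_const
    have : (fun ω => fM (X ω - a)) =
        fun ω => Real.exp (-Real.exp (σ * M ^ ((1 : ℝ) / 3) * (X ω - a))) := by
      funext ω; rw [hfM]
    rw [this]
    exact Real.measurable_exp.comp
      ((Real.measurable_exp.comp (measurable_const.mul h)).neg)
  have hint : ∀ a : ℝ, Integrable (fun ω => fM (X ω - a)) μ := by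
    intro a
    refine (integrable_const (1 : ℝ)).mono' (hfmeas a).aestronglyMeasurable
      (ae_of_all _ fun ω => ?_)
    rw [Real.norm_eq_abs, abs_of_nonneg (hfM01 _).1]
    exact (hfM01 _).2
  have hindint : Integrable (s.indicator fun _ => (1 : ℝ)) μ :=
    (integrable_const (1 : ℝ)).indicator hsm
  -- Part A : lower bound
  have hA : F xm - M ^ (-ε) - c1 ≤ G := by
    have hpt : ∀ ω, fM (X ω - xm) ≤ s.indicator (fun _ => (1 : ℝ)) ω + c1 := by
      intro ω
      by_cases hω : X ω ≤ x
      · rw [Set.indicator_of_mem (show ω ∈ s from hω)]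
        have := (hfM01 (X ω - xm)).2
        linarith
      · rw [Set.indicator_of_notMem (show ω ∉ s from hω)]
        push_neg at hω
        rw [zero_add, hfM, hc1]
        have hkey : σ * (Real.log M) ^ 2 ≤ σ * M ^ ((1 : ℝ) / 3) * (X ω - xm) := by
          have hx : M ^ (-(1 : ℝ) / 3) * (Real.log M) ^ 2 ≤ X ω - xm := by
            rw [hxm]; linarith
          calc σ * (Real.log M) ^ 2
              = σ * M ^ ((1 : ℝ) / 3) * (M ^ (-(1 : ℝ) / 3) * (Real.log M) ^ 2) := by
                rw [show σ * M ^ ((1:ℝ)/3) * (M ^ (-(1:ℝ)/3) * (Real.log M)^2)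
                    = σ * (M ^ ((1:ℝ)/3) * M ^ (-(1:ℝ)/3)) * (Real.log M)^2 by ring,
                  hMM]; ring
            _ ≤ σ * M ^ ((1 : ℝ) / 3) * (X ω - xm) := by
                exact mul_le_mul_of_nonneg_left hx (by positivity)
        exact Real.exp_le_exp.mpr (neg_le_neg (Real.exp_le_exp.mpr hkey))
    have hmono := integral_mono (hint xm) (hindint.add (integrable_const c1)) hpt
    simp only [Pi.add_apply] at hmono
    rw [integral_add hindint (integrable_const c1), hGint, integral_const,
      Measure.real, measure_univ, ENNReal.toReal_one, one_smul] at hmono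
    have habs := (abs_le.mp h1).1
    linarith
  -- Part B : upper bound
  have hB : G ≤ F xp + M ^ (-ε) + c2 := by
    have hpt : ∀ ω, s.indicator (fun _ => (1 : ℝ)) ω ≤ fM (X ω - xp) + c2 := by
      intro ω
      by_cases hω : X ω ≤ x
      · rw [Set.indicator_of_mem (show ω ∈ s from hω)]
        rw [hfM, hc2]
        have hkey : σ * M ^ ((1 : ℝ) / 3) * (X ω - xp) ≤ -σ * (Real.log M) ^ 2 := by
          have hx : X ω - xp ≤ -(M ^ (-(1 : ℝ) / 3) * (Real.log M) ^ 2) := by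
            rw [hxp]; linarith
          calc σ * M ^ ((1 : ℝ) / 3) * (X ω - xp)
              ≤ σ * M ^ ((1 : ℝ) / 3) * (-(M ^ (-(1 : ℝ) / 3) * (Real.log M) ^ 2)) :=
                mul_le_mul_of_nonneg_left hx (by positivity)
            _ = -σ * (Real.log M) ^ 2 := by
                rw [show σ * M ^ ((1:ℝ)/3) * (-(M ^ (-(1:ℝ)/3) * (Real.log M)^2))
                    = -(σ * (M ^ ((1:ℝ)/3) * M ^ (-(1:ℝ)/3)) * (Real.log M)^2) by ring,
                  hMM]; ring
        have := Real.exp_le_exp.mpr (neg_le_neg (Real.exp_le_exp.mpr hkey))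
        linarith
      · rw [Set.indicator_of_notMem (show ω ∉ s from hω)]
        have := (hfM01 (X ω - xp)).1
        linarith
    have hmono := integral_mono hindint ((hint xp).add (integrable_const c2)) hpt
    simp only [Pi.add_apply] at hmono
    rw [integral_add (hint xp) (integrable_const c2), hGint, integral_const,
      Measure.real, measure_univ, ENNReal.toReal_one, one_smul] at hmono
    have habs := (abs_le.mp h2).2
    linarith
  refine ⟨hA, by linarith, fun hp1 hp2 => ⟨by linarith, by linarith⟩⟩
end
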